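/- The integral (1/π) · ∫₀^{π/2} cos(t) · log(cot²(t/2)) dt equals 1. -/

import Mathlib

open Real Set intervalIntegral MeasureTheory

noncomputable def Gfun (t : ℝ) : ℝ := 2 * Real.log (Real.cos (t/2)) - 2 * Real.log (Real.sin (t/2))
noncomputable def Ffun (t : ℝ) : ℝ := Real.sin t * Gfun t + 2 * t

lemma Ffun_eq : Ffun = fun t => 2 * Real.sin t * Real.log (Real.cos (t/2))
    - 4 * Real.cos (t/2) * (Real.sin (t/2) * Real.log (Real.sin (t/2))) + 2 * t := by
  funext t
  have h : Real.sin t = 2 * Real.sin (t/2) * Real.cos (t/2) := by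
    rw [← Real.sin_two_mul]; ring_nf
  simp only [Ffun, Gfun]
  rw [h]; ring

lemma Ffun_cont : ContinuousOn Ffun (Icc 0 (π/2)) := by
  rw [Ffun_eq]
  have hc : ∀ t ∈ Icc (0:ℝ) (π/2), Real.cos (t/2) ≠ 0 := by
    intro t ht
    refine ne_of_gt (Real.cos_pos_of_mem_Ioo ⟨?_, ?_⟩)
    · nlinarith [ht.1, Real.pi_pos]
    · nlinarith [ht.2, Real.pi_pos]
  refine ContinuousOn.add (ContinuousOn.sub ?_ ?_) (by fun_prop)
  · exact ((continuous_const.mul continuous_sin).continuousOn.mul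
      (ContinuousOn.log (by fun_prop) (fun t ht => hc t ht)))
  · exact Continuous.continuousOn (by
      have := Real.continuous_mul_log
      fun_prop)

lemma Ffun_deriv {t : ℝ} (ht : t ∈ Ioo (0:ℝ) (π/2)) :
    HasDerivAt Ffun (Real.cos t * Gfun t) t := by
  have hs : 0 < Real.sin (t/2) := Real.sin_pos_of_pos_of_lt_pi (by linarith [ht.1])
    (by nlinarith [ht.2, Real.pi_pos])
  have hc : 0 < Real.cos (t/2) := Real.cos_pos_of_mem_Ioo
    ⟨by nlinarith [ht.1, Real.pi_pos], by nlinarith [ht.2, Real.pi_pos]⟩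
  have hhalf : HasDerivAt (fun t : ℝ => t/2) (1/2) t := (hasDerivAt_id t).div_const 2
  have hcos : HasDerivAt (fun t => Real.cos (t/2)) (-Real.sin (t/2) * (1/2)) t :=
    by have := (Real.hasDerivAt_cos (t/2)).comp t hhalf; exact this
  have hsin : HasDerivAt (fun t => Real.sin (t/2)) (Real.cos (t/2) * (1/2)) t :=
    by have := (Real.hasDerivAt_sin (t/2)).comp t hhalf; exact this
  have hlogc : HasDerivAt (fun t => Real.log (Real.cos (t/2)))
      ((Real.cos (t/2))⁻¹ * (-Real.sin (t/2) * (1/2))) t :=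
    by have := (Real.hasDerivAt_log hc.ne').comp t hcos; exact this
  have hlogs : HasDerivAt (fun t => Real.log (Real.sin (t/2)))
      ((Real.sin (t/2))⁻¹ * (Real.cos (t/2) * (1/2))) t :=
    by have := (Real.hasDerivAt_log hs.ne').comp t hsin; exact this
  have hG : HasDerivAt Gfun
      (2 * ((Real.cos (t/2))⁻¹ * (-Real.sin (t/2) * (1/2)))
        - 2 * ((Real.sin (t/2))⁻¹ * (Real.cos (t/2) * (1/2)))) t :=
    (hlogc.const_mul 2).sub (hlogs.const_mul 2)
  have hF := ((Real.hasDerivAt_sin t).mul hG).add ((hasDerivAt_id t).const_mul 2)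
  convert hF using 1
  · rfl
  · rfl
  · rfl
  have h2 : Real.sin t = 2 * Real.sin (t/2) * Real.cos (t/2) := by
    rw [← Real.sin_two_mul]; ring_nf
  have hpy : Real.sin (t/2) ^ 2 + Real.cos (t/2) ^ 2 = 1 := Real.sin_sq_add_cos_sq _
  rw [h2]
  field_simp
  linear_combination 2 * hpy

lemma Gfun_nonneg {t : ℝ} (ht : t ∈ Ioo (0:ℝ) (π/2)) : 0 ≤ Gfun t := by
  have hs : 0 < Real.sin (t/2) := Real.sin_pos_of_pos_of_lt_pi (by linarith [ht.1])
    (by nlinarith [ht.2, Real.pi_pos])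
  have hle : Real.sin (t/2) ≤ Real.cos (t/2) := by
    rw [← Real.sin_pi_div_two_sub]
    apply Real.strictMonoOn_sin.monotoneOn
    · constructor <;> nlinarith [ht.1, ht.2, Real.pi_pos]
    · constructor <;> nlinarith [ht.1, ht.2, Real.pi_pos]
    · nlinarith [ht.2]
  have := Real.log_le_log hs hle
  simp only [Gfun]; linarith

lemma integrand_nonneg {t : ℝ} (ht : t ∈ Ioo (0:ℝ) (π/2)) : 0 ≤ Real.cos t * Gfun t :=
  mul_nonneg (Real.cos_nonneg_of_mem_Icc ⟨by linarith [ht.1, Real.pi_pos], ht.2.le⟩)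
    (Gfun_nonneg ht)

theorem energy_integral_eval :
    (1 / π) * ∫ t in (0 : ℝ)..(π / 2), Real.cos t * Real.log ((Real.cot (t / 2)) ^ 2) = 1 := by
  have hpi : (0:ℝ) < π := Real.pi_pos
  have heq : ∀ t ∈ uIcc (0:ℝ) (π/2),
      Real.cos t * Real.log ((Real.cot (t / 2)) ^ 2) = Real.cos t * Gfun t := by
    intro t ht
    rw [uIcc_of_le (by positivity)] at ht
    rcases eq_or_lt_of_le ht.1 with h0 | h0
    · subst h0
      simp [Real.cot_eq_cos_div_sin, Gfun]
    · have hs : 0 < Real.sin (t/2) := Real.sin_pos_of_pos_of_lt_pi (by linarith)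
        (by nlinarith [ht.2])
      have hc : 0 < Real.cos (t/2) := Real.cos_pos_of_mem_Ioo
        ⟨by nlinarith, by nlinarith [ht.2]⟩
      rw [Real.cot_eq_cos_div_sin, Real.log_pow, Real.log_div hc.ne' hs.ne']
      simp only [Gfun]; ring
  rw [intervalIntegral.integral_congr heq]
  have hmin : min (0:ℝ) (π/2) = 0 := by simp [hpi.le]; positivity
  have hmax : max (0:ℝ) (π/2) = π/2 := by simp; positivity
  have hint : IntervalIntegrable (fun t => Real.cos t * Gfun t) volume 0 (π/2) := by
    apply intervalIntegrable_deriv_of_nonneg (g := Ffun)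
    · rw [uIcc_of_le (by positivity)]; exact Ffun_cont
    · rw [hmin, hmax]; exact fun x hx => Ffun_deriv hx
    · rw [hmin, hmax]; exact fun x hx => integrand_nonneg hx
  have h1 := intervalIntegral.integral_eq_sub_of_hasDerivAt_of_le (a := 0) (b := π/2)
    (f := Ffun) (f' := fun t => Real.cos t * Gfun t) (by positivity)
    Ffun_cont (fun x hx => Ffun_deriv hx) hint
  rw [h1]
  have : Ffun (π/2) = π := by
    simp [Ffun, Gfun, Real.sin_pi_div_two]
    norm_num [show (π/2)/2 = π/4 by ring, Real.cos_pi_div_four, Real.sin_pi_div_four]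
    ring
  rw [this, show Ffun 0 = 0 by simp [Ffun, Gfun]]
  field_simp
  ring
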